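/- Let m be root-like with distinguished index i and let n be root-like with distinguished index j, where i ≠ j, m(j) = 0, and n(i) = −p with p ≥ 0 an integer. If p > 0, then m + n is root-like with distinguished index j and y_m ∘ y_n − y_n ∘ y_m = p · y_{m+n}; if p = 0, then y_m ∘ y_n = y_n ∘ y_m (the derivations commute). -/

import Mathlib

open MvPolynomial

/-- For a "root-like" integer vector `m` with distinguished index `i`
(`m i = 1` and `m ϱ ≤ 0` for `ϱ ≠ i`), the unique ℂ-linear derivation `y_m` of
`MvPolynomial ι ℂ` with `y_m (X i) = ∏_{ϱ ≠ i} X ϱ ^ (−m ϱ)` and `y_m (X ϱ) = 0`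
for `ϱ ≠ i`. -/
noncomputable def yDer {ι : Type*} [Fintype ι] [DecidableEq ι] (m : ι → ℤ) (i : ι) :
    Derivation ℂ (MvPolynomial ι ℂ) (MvPolynomial ι ℂ) :=
  MvPolynomial.mkDerivation ℂ (fun ϱ =>
    if ϱ = i then ∏ ϱ' ∈ Finset.univ.erase i, (X ϱ' : MvPolynomial ι ℂ) ^ (-(m ϱ')).toNat
    else 0)

section Aux

variable {ι : Type*} [Fintype ι] [DecidableEq ι]

lemma yDer_X_self (m : ι → ℤ) (i : ι) :
    yDer m i (X i) =
      ∏ ϱ' ∈ Finset.univ.erase i, (X ϱ' : MvPolynomial ι ℂ) ^ (-(m ϱ')).toNat := by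
  simp [yDer, mkDerivation_X]

lemma yDer_X_ne (m : ι → ℤ) {i ϱ : ι} (h : ϱ ≠ i) : yDer m i (X ϱ) = 0 := by
  simp [yDer, mkDerivation_X, h]

lemma der_prod_zero (D : Derivation ℂ (MvPolynomial ι ℂ) (MvPolynomial ι ℂ))
    (s : Finset ι) (f : ι → MvPolynomial ι ℂ) (h : ∀ a ∈ s, D (f a) = 0) :
    D (∏ a ∈ s, f a) = 0 := by
  classical
  induction s using Finset.induction with
  | empty => simp
  | @insert a s ha ih =>
    rw [Finset.prod_insert ha, Derivation.leibniz,
      ih (fun b hb => h b (Finset.mem_insert_of_mem hb)),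
      h a (Finset.mem_insert_self a s)]
    simp

lemma yDer_prod_pow_zero (m : ι → ℤ) (i : ι) (s : Finset ι) (e : ι → ℕ)
    (h : ∀ a ∈ s, a ≠ i ∨ e a = 0) :
    yDer m i (∏ a ∈ s, (X a : MvPolynomial ι ℂ) ^ e a) = 0 := by
  apply der_prod_zero
  intro a ha
  rcases h a ha with h' | h'
  · rw [Derivation.leibniz_pow, yDer_X_ne m h', smul_zero, smul_zero]
  · rw [h', pow_zero, Derivation.map_one_eq_zero]

lemma yDer_bracket (m n : ι → ℤ) (i j : ι) (hij : i ≠ j)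
    (hmi : m i = 1) (hm : ∀ ϱ, ϱ ≠ i → m ϱ ≤ 0)
    (hn : ∀ ϱ, ϱ ≠ j → n ϱ ≤ 0)
    (hmj : m j = 0) (p : ℤ) (hp : 0 ≤ p) (hni : n i = -p) :
    ⁅yDer m i, yDer n j⁆ = p • yDer (m + n) j := by
  apply derivation_ext
  intro ϱ
  rw [Derivation.commutator_apply, Derivation.smul_apply]
  by_cases hj : ϱ = j
  · subst hj
    have hi : i ∈ Finset.univ.erase ϱ := Finset.mem_erase.mpr ⟨hij, Finset.mem_univ i⟩
    rw [yDer_X_ne m hij.symm, map_zero, sub_zero, yDer_X_self n ϱ, yDer_X_self (m + n) ϱ,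
      ← Finset.mul_prod_erase _ _ hi, ← Finset.mul_prod_erase _ _ hi,
      Derivation.leibniz,
      yDer_prod_pow_zero m i _ _ (fun a ha => Or.inl (Finset.mem_erase.mp ha).1),
      smul_zero, zero_add, Derivation.leibniz_pow, yDer_X_self m i]
    have hA : (∏ a ∈ Finset.univ.erase i, (X a : MvPolynomial ι ℂ) ^ (-(m a)).toNat)
        = ∏ a ∈ (Finset.univ.erase ϱ).erase i, (X a : MvPolynomial ι ℂ) ^ (-(m a)).toNat := by
      rw [Finset.erase_right_comm,
        ← Finset.mul_prod_erase (Finset.univ.erase i) _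
          (Finset.mem_erase.mpr ⟨hij.symm, Finset.mem_univ ϱ⟩), hmj]
      norm_num
    rw [hA]
    have hexp : ∀ a ∈ (Finset.univ.erase ϱ).erase i,
        (X a : MvPolynomial ι ℂ) ^ (-((m + n) a)).toNat
          = X a ^ (-(m a)).toNat * X a ^ (-(n a)).toNat := by
      intro a ha
      obtain ⟨hai, haj⟩ := Finset.mem_erase.mp ha
      have haj' := (Finset.mem_erase.mp haj).1
      rw [← pow_add]
      congr 1
      have h1 := hm a hai
      have h2 := hn a haj'
      simp only [Pi.add_apply]
      omega
    rw [Finset.prod_congr rfl hexp, Finset.prod_mul_distrib]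
    have he1 : (-((m + n) i)).toNat = p.toNat - 1 := by
      simp only [Pi.add_apply, hni, hmi]
      omega
    have he2 : (-(n i)).toNat = p.toNat := by omega
    rw [he1, he2, ← Int.toNat_of_nonneg hp]
    simp only [smul_eq_mul, nsmul_eq_mul, zsmul_eq_mul, Int.cast_natCast, Int.toNat_natCast]
    ring
  · by_cases hi : ϱ = i
    · subst hi
      rw [yDer_X_ne n hij, map_zero, zero_sub, yDer_X_ne (m + n) hij, smul_zero,
        yDer_X_self m ϱ]
      rw [yDer_prod_pow_zero n j _ _ ?_, neg_zero]
      intro a ha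
      by_cases haj : a = j
      · subst haj
        right
        simp [hmj]
      · exact Or.inl haj
    · rw [yDer_X_ne m hi, yDer_X_ne n hj, map_zero, map_zero, sub_zero,
        yDer_X_ne (m + n) hj, smul_zero]

end Aux

/-- Let `m` be root-like with distinguished index `i` and `n` root-like
with distinguished index `j`, where `i ≠ j`, `m j = 0`, and `n i = −p` with `p ≥ 0`.
If `p > 0`, then `m + n` is root-like with distinguished index `j` and
`y_m ∘ y_n − y_n ∘ y_m = p • y_{m+n}`; if `p = 0`, the derivations `y_m` and `y_n`
commute. -/
theorem yDer_commutator
    {ι : Type*} [Fintype ι] [DecidableEq ι]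
    (m n : ι → ℤ) (i j : ι) (hij : i ≠ j)
    (hmi : m i = 1) (hm : ∀ ϱ, ϱ ≠ i → m ϱ ≤ 0)
    (hnj : n j = 1) (hn : ∀ ϱ, ϱ ≠ j → n ϱ ≤ 0)
    (hmj : m j = 0) (p : ℤ) (hp : 0 ≤ p) (hni : n i = -p) :
    (0 < p →
      ((m + n) j = 1 ∧ ∀ ϱ, ϱ ≠ j → (m + n) ϱ ≤ 0) ∧
      ∀ f : MvPolynomial ι ℂ,
        yDer m i (yDer n j f) - yDer n j (yDer m i f) = p • yDer (m + n) j f) ∧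
    (p = 0 → ∀ f : MvPolynomial ι ℂ,
        yDer m i (yDer n j f) = yDer n j (yDer m i f)) := by
  have key := yDer_bracket m n i j hij hmi hm hn hmj p hp hni
  have main : ∀ f : MvPolynomial ι ℂ,
      yDer m i (yDer n j f) - yDer n j (yDer m i f) = p • yDer (m + n) j f := by
    intro f
    rw [← Derivation.commutator_apply, key, Derivation.smul_apply]
  constructor
  · intro hp0
    refine ⟨⟨?_, ?_⟩, main⟩
    · simp [hmj, hnj]
    · intro ϱ hϱ
      by_cases hϱi : ϱ = i
      · subst hϱi
        simp only [Pi.add_apply, hmi, hni]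
        omega
      · have := hm ϱ hϱi
        have := hn ϱ hϱ
        simp only [Pi.add_apply]
        omega
  · intro hp0 f
    have := main f
    rw [hp0, zero_smul] at this
    exact sub_eq_zero.mp this
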